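/- For the two-colour coordination game on a complete graph Kₙ (n ≥ 2), there exists a stable transition that is not a Nash equilibrium if and only if n is even. -/
import Mathlib


/-- Utility of node `i` in the coordination game on graph `G` with colouring `s`:
the number of neighbours of `i` sharing `i`'s colour. -/
noncomputable def coordUtil {V : Type*} (G : SimpleGraph V) (s : V → Fin 2) (i : V) : ℕ :=
  {j | G.Adj i j ∧ s j = s i}.ncard

/-- `i`'s current colour is a best response in colouring `s`. -/
def isBR {V : Type*} [DecidableEq V] (G : SimpleGraph V) (s : V → Fin 2) (i : V) : Prop :=
  ∀ x : Fin 2, coordUtil G (Function.update s i x) i ≤ coordUtil G s i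

/-- `s` is a (pure) Nash equilibrium of the coordination game on `G`. -/
def isNashEq {V : Type*} [DecidableEq V] (G : SimpleGraph V) (s : V → Fin 2) : Prop :=
  ∀ i, isBR G s i

/-- `s` is a stable transition: every non-best-responding player `i` has another
non-best-responding player `j` one of whose best responses renders `i`'s current
colour a best response. (Since monochromatic colourings are equilibria, every
colouring is a transition of the Nash equilibria.) -/
def isStableTransition {V : Type*} [DecidableEq V] (G : SimpleGraph V)
    (s : V → Fin 2) : Prop :=
  ∀ i, ¬ isBR G s i → ∃ j, j ≠ i ∧ ¬ isBR G s j ∧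
    ∃ x : Fin 2,
      (∀ y : Fin 2,
        coordUtil G (Function.update s j y) j ≤ coordUtil G (Function.update s j x) j) ∧
      isBR G (Function.update s j x) i

open Finset

variable {n : ℕ}

/-- number of nodes of colour `x` -/
def ct (s : Fin n → Fin 2) (x : Fin 2) : ℕ := (Finset.univ.filter (fun j => s j = x)).card

/-- number of nodes `≠ i` of colour `x` -/
def cnt (s : Fin n → Fin 2) (i : Fin n) (x : Fin 2) : ℕ :=
  ((Finset.univ.filter (fun j => s j = x)).erase i).card

lemma coordUtil_top_update (s : Fin n → Fin 2) (i : Fin n) (x : Fin 2) :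
    coordUtil (⊤ : SimpleGraph (Fin n)) (Function.update s i x) i = cnt s i x := by
  unfold coordUtil cnt
  have h : {j | (⊤ : SimpleGraph (Fin n)).Adj i j ∧
        Function.update s i x j = Function.update s i x i}
      = ↑((Finset.univ.filter (fun j => s j = x)).erase i) := by
    ext j
    simp only [SimpleGraph.top_adj, Set.mem_setOf_eq, coe_erase, Set.mem_diff, mem_coe,
      mem_filter, mem_univ, true_and, Set.mem_singleton_iff, Function.update_self]
    constructor
    · rintro ⟨hij, hj⟩
      have hji : j ≠ i := fun h => hij h.symm
      rw [Function.update_of_ne hji] at hj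
      exact ⟨hj, hji⟩
    · rintro ⟨hj, hji⟩
      refine ⟨fun h => hji h.symm, ?_⟩
      rw [Function.update_of_ne hji]; exact hj
  rw [h, Set.ncard_coe_finset]

lemma coordUtil_top (s : Fin n → Fin 2) (i : Fin n) :
    coordUtil (⊤ : SimpleGraph (Fin n)) s i = cnt s i (s i) := by
  have := coordUtil_top_update s i (s i)
  rwa [Function.update_eq_self] at this

lemma isBR_top_iff (s : Fin n → Fin 2) (i : Fin n) :
    isBR (⊤ : SimpleGraph (Fin n)) s i ↔ ∀ x, cnt s i x ≤ cnt s i (s i) := by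
  unfold isBR
  refine forall_congr' fun x => ?_
  rw [coordUtil_top_update, coordUtil_top]

lemma fin2_cases (x : Fin 2) : x = 0 ∨ x = 1 := by omega

lemma fin2_ne (x y : Fin 2) (h : x ≠ y) (a : Fin 2) : a = y ↔ ¬ a = x := by
  rcases fin2_cases x with rfl | rfl <;> rcases fin2_cases y with rfl | rfl <;>
    rcases fin2_cases a with rfl | rfl <;> simp_all

lemma ct_add (s : Fin n → Fin 2) {x y : Fin 2} (h : x ≠ y) : ct s x + ct s y = n := by
  unfold ct
  have h2 : (Finset.univ.filter (fun j => s j = y))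
      = Finset.univ.filter (fun j => ¬ s j = x) := by
    apply Finset.filter_congr
    intro j _
    simp only [fin2_ne x y h (s j)]
  rw [h2, Finset.card_filter_add_card_filter_not, Finset.card_univ, Fintype.card_fin]

lemma cnt_self (s : Fin n → Fin 2) (i : Fin n) : cnt s i (s i) = ct s (s i) - 1 := by
  unfold cnt ct
  rw [Finset.card_erase_of_mem (by simp)]

lemma ct_self_pos (s : Fin n → Fin 2) (i : Fin n) : 1 ≤ ct s (s i) := by
  unfold ct
  exact Finset.card_pos.2 ⟨i, by simp⟩

lemma cnt_ne (s : Fin n → Fin 2) (i : Fin n) {x : Fin 2} (h : s i ≠ x) :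
    cnt s i x = ct s x := by
  unfold cnt ct
  rw [Finset.erase_eq_of_notMem (by simp [h])]

lemma ct_update_new (s : Fin n → Fin 2) (j : Fin n) {x : Fin 2} (h : s j ≠ x) :
    ct (Function.update s j x) x = ct s x + 1 := by
  unfold ct
  have : (Finset.univ.filter (fun k => Function.update s j x k = x))
      = insert j (Finset.univ.filter (fun k => s k = x)) := by
    ext k
    by_cases hk : k = j
    · subst hk; simp
    · simp [Function.update_of_ne hk, hk]
  rw [this, Finset.card_insert_of_notMem (by simp [h])]

lemma ct_update_old (s : Fin n → Fin 2) (j : Fin n) {x : Fin 2} (h : s j ≠ x) :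
    ct (Function.update s j x) (s j) = ct s (s j) - 1 := by
  unfold ct
  have : (Finset.univ.filter (fun k => Function.update s j x k = s j))
      = (Finset.univ.filter (fun k => s k = s j)).erase j := by
    ext k
    by_cases hk : k = j
    · subst hk; simp [Ne.symm h]
    · simp [Function.update_of_ne hk, hk]
  rw [this, Finset.card_erase_of_mem (by simp)]

lemma fin2_eq_or (a b c : Fin 2) (h : a ≠ b) : c = a ∨ c = b := by omega

lemma nash_of_odd {n : ℕ} (hodd : ¬ Even n) (s : Fin n → Fin 2)
    (hst : isStableTransition (⊤ : SimpleGraph (Fin n)) s) :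
    ∀ i, isBR (⊤ : SimpleGraph (Fin n)) s i := by
  intro i
  by_contra hi
  obtain ⟨j, hji, hj, x, hbest, hBRi⟩ := hst i hi
  obtain ⟨o, ho⟩ : ∃ o : Fin 2, s i ≠ o := by
    rcases fin2_cases (s i) with h | h
    exacts [⟨1, by omega⟩, ⟨0, by omega⟩]
  set a := ct s (s i) with ha
  set b := ct s o with hb
  have hab : a + b = n := ct_add s ho
  have ha1 : 1 ≤ a := ct_self_pos s i
  -- i is not best responding, so b > a - 1, hence (n odd) b ≥ a + 1
  have hba : a ≤ b := by
    rw [isBR_top_iff] at hi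
    push_neg at hi
    obtain ⟨x', hx'⟩ := hi
    have hxo : x' = o := by
      rcases fin2_eq_or (s i) o x' ho with rfl | rfl
      · exact absurd hx' (lt_irrefl _)
      · rfl
    subst hxo
    rw [cnt_ne s i ho, cnt_self] at hx'
    omega
  have hne : a ≠ b := by
    intro h
    exact hodd ⟨a, by omega⟩
  have hba1 : a + 1 ≤ b := by omega
  -- j has the same colour as i
  have hsj : s j = s i := by
    rcases fin2_eq_or (s i) o (s j) ho with h | h
    · exact h
    · exfalso
      apply hj
      rw [isBR_top_iff]
      intro y
      rcases fin2_eq_or (s i) o y ho with rfl | rfl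
      · have e1 : cnt s j (s i) = ct s (s i) :=
          cnt_ne s j (by rw [h]; exact Ne.symm ho)
        have e2 : cnt s j (s j) = ct s o - 1 := by
          rw [h]
          have := cnt_self s j
          rwa [h] at this
        omega
      · rw [h]
  -- j's best response is o
  have hsjo : s j ≠ o := by rw [hsj]; exact ho
  have hxo : x = o := by
    rcases fin2_eq_or (s i) o x ho with h1 | h1
    · exfalso
      have h2 := hbest o
      rw [coordUtil_top_update, coordUtil_top_update, h1] at h2
      have e1 : cnt s j o = ct s o := cnt_ne s j hsjo
      have e2 : cnt s j (s i) = ct s (s i) - 1 := by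
        have := cnt_self s j
        rwa [hsj] at this
      omega
    · exact h1
  rw [hxo] at hBRi
  -- after j switches to o, i cannot be best responding
  have hji' : i ≠ j := Ne.symm hji
  rw [isBR_top_iff] at hBRi
  have hkey := hBRi o
  have hs2i : Function.update s j o i = s i := Function.update_of_ne hji' _ _
  rw [hs2i] at hkey
  have e3 : cnt (Function.update s j o) i o = ct (Function.update s j o) o :=
    cnt_ne _ i (by rw [hs2i]; exact ho)
  have e4 : cnt (Function.update s j o) i (s i)
      = ct (Function.update s j o) (s i) - 1 := by
    have := cnt_self (Function.update s j o) i
    rwa [hs2i] at this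
  have e5 : ct (Function.update s j o) o = ct s o + 1 := ct_update_new s j hsjo
  have e6 : ct (Function.update s j o) (s i) = ct s (s i) - 1 := by
    have := ct_update_old s j hsjo
    rwa [hsj] at this
  omega

lemma exists_of_even {n : ℕ} (hn : 2 ≤ n) (m : ℕ) (hm : n = m + m) :
    ∃ s : Fin n → Fin 2,
      isStableTransition (⊤ : SimpleGraph (Fin n)) s ∧
        ∃ i, ¬ isBR (⊤ : SimpleGraph (Fin n)) s i := by
  have hm1 : 1 ≤ m := by omega
  set s : Fin n → Fin 2 := fun j => if (j : ℕ) < m then 0 else 1 with hs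
  have hct0 : ct s 0 = m := by
    unfold ct
    have h1 : (Finset.univ.filter (fun j : Fin n => s j = 0))
        = Finset.Iio (⟨m, by omega⟩ : Fin n) := by
      ext j
      simp only [Finset.mem_filter, Finset.mem_univ, true_and, Finset.mem_Iio, hs]
      constructor
      · intro h
        by_contra hlt
        simp only [Fin.lt_def, not_lt] at hlt
        rw [if_neg (by omega)] at h
        exact absurd h (by omega)
      · intro h
        rw [if_pos (by exact h)]
    rw [h1, Fin.card_Iio]
  have hct1 : ct s 1 = m := by
    have := ct_add s (show (0 : Fin 2) ≠ 1 by omega)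
    omega
  have hctx : ∀ x : Fin 2, ct s x = m := by
    intro x; rcases fin2_cases x with rfl | rfl <;> assumption
  have hnot : ∀ i, ¬ isBR (⊤ : SimpleGraph (Fin n)) s i := by
    intro i hBR
    rw [isBR_top_iff] at hBR
    obtain ⟨x, hx⟩ : ∃ x : Fin 2, s i ≠ x := by
      rcases fin2_cases (s i) with h | h
      exacts [⟨1, by omega⟩, ⟨0, by omega⟩]
    have h1 := hBR x
    rw [cnt_ne s i hx, cnt_self, hctx, hctx] at h1
    omega
  refine ⟨s, ?_, ⟨0, by omega⟩, hnot _⟩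
  intro i _
  obtain ⟨j, hj⟩ : ∃ j : Fin n, s j ≠ s i := by
    rcases fin2_cases (s i) with h | h
    · refine ⟨⟨m, by omega⟩, ?_⟩
      have h1 : s ⟨m, by omega⟩ = 1 := by simp [hs]
      rw [h1, h]
      omega
    · refine ⟨⟨0, by omega⟩, ?_⟩
      have h1 : s ⟨0, by omega⟩ = 0 := by
        simp only [hs]
        rw [if_pos (by omega)]
      rw [h1, h]
      omega
  refine ⟨j, fun h => hj (by rw [h]), hnot j, s i, ?_, ?_⟩
  · intro y
    rw [coordUtil_top_update, coordUtil_top_update, cnt_ne s j hj]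
    by_cases hy : s j = y
    · rw [← hy, cnt_self, hctx, hctx]
      omega
    · rw [cnt_ne s j hy, hctx, hctx]
  · rw [isBR_top_iff]
    have hij : i ≠ j := fun h => hj (by rw [h])
    have hs2i : Function.update s j (s i) i = s i := Function.update_of_ne hij _ _
    intro x
    by_cases hx : Function.update s j (s i) i = x
    · rw [hx]
    · have hxj : x = s j := by
        rcases fin2_eq_or (s i) (s j) x (Ne.symm hj) with h1 | h1
        · exact absurd (hs2i.trans h1.symm) hx
        · exact h1
      rw [cnt_ne _ i hx, cnt_self, hs2i, hxj, ct_update_old s j hj,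
        ct_update_new s j hj, hctx, hctx]
      omega

/-- For the two-colour coordination game on the complete graph `Kₙ` (`n ≥ 2`), a
stable transition that is not a Nash equilibrium exists iff `n` is even. -/
theorem stmt18 (n : ℕ) (hn : 2 ≤ n) :
    (∃ s : Fin n → Fin 2,
      isStableTransition (⊤ : SimpleGraph (Fin n)) s ∧
        ¬ isNashEq (⊤ : SimpleGraph (Fin n)) s) ↔ Even n := by
  constructor
  · rintro ⟨s, hst, hnn⟩
    by_contra hne
    exact hnn (nash_of_odd hne s hst)
  · rintro ⟨m, hm⟩
    obtain ⟨s, hst, i, hi⟩ := exists_of_even hn m hm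
    exact ⟨s, hst, fun h => hi (h i)⟩
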